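/- For n⁺, n⁻ > 0, t ∈ (0,1], F ≥ 0, and 0 ≤ α with t·n⁺ + F·n⁻ - α·n⁻ > 0, it holds that t·n⁺/(t·n⁺ + (F-α)·n⁻) - t·n⁺/(t·n⁺ + F·n⁻) ≤ α/(t·(n⁺/n⁻) - α·(n⁻/n⁻)) when n⁺/n⁻ < 1, i.e., the precision error is at most α/(t·r - α) where r = n⁺/n⁻, provided t·r > α. -/

import Mathlib

/-- Precision error bound under class imbalance (`r = n⁺/n⁻ < 1`):
`t·n⁺/(t·n⁺+(F-α)·n⁻) - t·n⁺/(t·n⁺+F·n⁻) ≤ α/(t·r - α)`, provided `t·r > α`. -/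
theorem stmt_7 (np nn t F α : ℝ) (hnp : 0 < np) (hnn : 0 < nn)
    (ht0 : 0 < t) (ht1 : t ≤ 1) (hF : 0 ≤ F) (hα : 0 ≤ α)
    (hden : 0 < t * np + F * nn - α * nn)
    (hr : np / nn < 1) (htr : α < t * (np / nn)) :
    t * np / (t * np + (F - α) * nn) - t * np / (t * np + F * nn)
      ≤ α / (t * (np / nn) - α) := by
  have hAC : α * nn < t * np := by
    rw [← mul_div_assoc] at htr
    exact (lt_div_iff₀ hnn).mp htr
  have hrw : α / (t * (np / nn) - α) = (α * nn) / (t * np - α * nn) := by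
    rw [show t * (np / nn) - α = (t * np - α * nn) / nn by field_simp,
      div_div_eq_mul_div]
  rw [hrw]
  have hd1 : 0 < t * np + (F - α) * nn := by nlinarith
  have hd2 : 0 < t * np + F * nn := by nlinarith
  have hd3 : 0 < t * np - α * nn := by linarith
  rw [div_sub_div _ _ hd1.ne' hd2.ne', div_le_div_iff₀ (by positivity) hd3]
  nlinarith [mul_pos hd2 hd3, mul_nonneg (mul_nonneg hα hnn.le) (mul_nonneg hF hnn.le),
    mul_nonneg (mul_nonneg (mul_nonneg hα hnn.le) (mul_nonneg hF hnn.le)) hd2.le,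
    mul_nonneg (mul_nonneg (mul_nonneg hα hnn.le) (mul_nonneg hF hnn.le)) (mul_pos ht0 hnp).le]
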